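/- Let (Ω₁, d₁) and (Ω₂, d₂) be complete separable metric spaces. Let X be a random variable with values in Ω₁ and let Y_n, Y be random variables with values in Ω₂, all defined on the same probability space, such that the pairs (X, Y_n) converge in distribution to (X, Y). If Y is almost surely equal to f(X) for some measurable function f : Ω₁ → Ω₂, then Y_n converges to Y in probability. -/

import Mathlib

open MeasureTheory Filter

open scoped BoundedContinuousFunction Topology ENNReal

private lemma bdd_integrable {Ω : Type*} [MeasurableSpace Ω] {P : Measure Ω} [IsFiniteMeasure P]
    {u : Ω → ℝ} (hu : Measurable u) {C : ℝ} (hC : ∀ ω, |u ω| ≤ C) : Integrable u P :=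
  (integrable_const C).mono' hu.aestronglyMeasurable
    (Filter.Eventually.of_forall fun ω => by simpa [Real.norm_eq_abs] using hC ω)

private lemma cheb {Ω : Type*} [MeasurableSpace Ω] (P : Measure Ω) {u : Ω → ℝ}
    (hu : Measurable u) (hint : Integrable (fun ω => (u ω) ^ 2) P) :
    P {ω | (1/2 : ℝ) ≤ |u ω|} ≤ 4 * ENNReal.ofReal (∫ ω, (u ω) ^ 2 ∂P) := by
  have hsub : {ω | (1/2 : ℝ) ≤ |u ω|} ⊆
      {ω | ENNReal.ofReal (1/4) ≤ ENNReal.ofReal ((u ω) ^ 2)} := by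
    intro ω hω
    simp only [Set.mem_setOf_eq] at hω ⊢
    apply ENNReal.ofReal_le_ofReal
    nlinarith [sq_abs (u ω), abs_nonneg (u ω)]
  have h1 : P {ω | (1/2 : ℝ) ≤ |u ω|} ≤
      P {ω | ENNReal.ofReal (1/4) ≤ ENNReal.ofReal ((u ω) ^ 2)} := measure_mono hsub
  have h2 : ENNReal.ofReal (1/4) * P {ω | ENNReal.ofReal (1/4) ≤ ENNReal.ofReal ((u ω) ^ 2)} ≤
      ∫⁻ ω, ENNReal.ofReal ((u ω) ^ 2) ∂P :=
    mul_meas_ge_le_lintegral₀ ((hu.pow_const 2).ennreal_ofReal.aemeasurable) _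
  have h3 : ∫⁻ ω, ENNReal.ofReal ((u ω) ^ 2) ∂P = ENNReal.ofReal (∫ ω, (u ω) ^ 2 ∂P) :=
    (ofReal_integral_eq_lintegral_ofReal hint
      (Filter.Eventually.of_forall fun ω => sq_nonneg _)).symm
  have h4 : (4 : ℝ≥0∞) * ENNReal.ofReal (1/4) = 1 := by
    rw [show (4 : ℝ≥0∞) = ENNReal.ofReal 4 by simp, ← ENNReal.ofReal_mul (by norm_num)]
    norm_num
  calc P {ω | (1/2 : ℝ) ≤ |u ω|}
      ≤ P {ω | ENNReal.ofReal (1/4) ≤ ENNReal.ofReal ((u ω) ^ 2)} := h1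
    _ = 4 * ENNReal.ofReal (1/4) * P {ω | ENNReal.ofReal (1/4) ≤ ENNReal.ofReal ((u ω) ^ 2)} := by
        rw [h4, one_mul]
    _ = 4 * (ENNReal.ofReal (1/4) * P {ω | ENNReal.ofReal (1/4) ≤ ENNReal.ofReal ((u ω) ^ 2)}) := by
        rw [mul_assoc]
    _ ≤ 4 * ∫⁻ ω, ENNReal.ofReal ((u ω) ^ 2) ∂P := by gcongr
    _ = 4 * ENNReal.ofReal (∫ ω, (u ω) ^ 2 ∂P) := by rw [h3]

private lemma sq_tendsto {Ω : Type*} [MeasurableSpace Ω] (P : Measure Ω) [IsProbabilityMeasure P]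
    {Ω₁ Ω₂ : Type*}
    [MetricSpace Ω₁] [MeasurableSpace Ω₁] [BorelSpace Ω₁]
    [MetricSpace Ω₂] [MeasurableSpace Ω₂] [BorelSpace Ω₂]
    (X : Ω → Ω₁) (Y : ℕ → Ω → Ω₂) (Ylim : Ω → Ω₂)
    (hX : Measurable X) (hY : ∀ n, Measurable (Y n)) (hYlim : Measurable Ylim)
    (f : Ω₁ → Ω₂) (hf : Measurable f) (hdet : ∀ᵐ ω ∂P, Ylim ω = f (X ω))
    (hconv : ∀ g : BoundedContinuousFunction (Ω₁ × Ω₂) ℝ,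
      Tendsto (fun n => ∫ ω, g (X ω, Y n ω) ∂P) atTop (nhds (∫ ω, g (X ω, Ylim ω) ∂P)))
    (h : Ω₂ →ᵇ ℝ) :
    Tendsto (fun n => ∫ ω, (h (Y n ω) - h (Ylim ω)) ^ 2 ∂P) atTop (𝓝 0) := by
  set M : ℝ := ‖h‖ + 1 with hM_def
  have hM : 0 < M := by positivity
  have hb : ∀ z : Ω₂, |h z| ≤ M := fun z => by
    have := h.norm_coe_le_norm z
    rw [Real.norm_eq_abs] at this
    linarith
  have mHn : ∀ n, Measurable fun ω => h (Y n ω) :=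
    fun n => h.continuous.measurable.comp (hY n)
  have mH : Measurable fun ω => h (Ylim ω) := h.continuous.measurable.comp hYlim
  have mhfX : Measurable fun ω => h (f (X ω)) :=
    (h.continuous.measurable.comp hf).comp hX
  have imul : ∀ (u v : Ω → ℝ) (Cu Cv : ℝ), Measurable u → Measurable v → (∀ ω, |u ω| ≤ Cu) →
      (∀ ω, |v ω| ≤ Cv) → Integrable (fun ω => u ω * v ω) P := by
    intro u v Cu Cv hu hv hu' hv'
    refine bdd_integrable (hu.mul hv) (C := |Cu| * |Cv|) fun ω => ?_
    rw [abs_mul]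
    exact mul_le_mul ((hu' ω).trans (le_abs_self _)) ((hv' ω).trans (le_abs_self _))
      (abs_nonneg _) (abs_nonneg _)
  set c : ℝ := ∫ ω, h (Ylim ω) * h (Ylim ω) ∂P with hc_def
  have hA : Tendsto (fun n => ∫ ω, h (Y n ω) * h (Y n ω) ∂P) atTop (𝓝 c) := by
    have := hconv ((h.compContinuous ⟨Prod.snd, continuous_snd⟩) *
      (h.compContinuous ⟨Prod.snd, continuous_snd⟩))
    simpa using this
  have hB : Tendsto (fun n => ∫ ω, h (Y n ω) * h (Ylim ω) ∂P) atTop (𝓝 c) := by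
    rw [Metric.tendsto_atTop]
    intro ε hε
    have hmapP : IsProbabilityMeasure (P.map X) := Measure.isProbabilityMeasure_map hX.aemeasurable
    have hint0 : Integrable (fun x => h (f x)) (P.map X) :=
      bdd_integrable (h.continuous.measurable.comp hf) (C := M) fun x => hb _
    obtain ⟨k, hk, -⟩ :=
      hint0.exists_boundedContinuous_integral_sub_le (ε := ε / (4 * M)) (by positivity)
    set r : ℝ := ∫ ω, |h (f (X ω)) - k (X ω)| ∂P with hr_def
    have hkM : ∀ x : Ω₁, |k x| ≤ ‖k‖ := fun x => by
      have := k.norm_coe_le_norm x; rwa [Real.norm_eq_abs] at this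
    have mkX : Measurable fun ω => k (X ω) := k.continuous.measurable.comp hX
    have hr : r ≤ ε / (4 * M) := by
      have hmap : ∫ x, ‖h (f x) - k x‖ ∂(P.map X) = ∫ ω, ‖h (f (X ω)) - k (X ω)‖ ∂P :=
        integral_map hX.aemeasurable
          (((h.continuous.measurable.comp hf).sub
            k.continuous.measurable).norm.aestronglyMeasurable)
      rw [hmap] at hk
      simpa [Real.norm_eq_abs, hr_def] using hk
    have hr0 : 0 ≤ r := integral_nonneg fun ω => abs_nonneg _
    have idiff : Integrable (fun ω => h (f (X ω)) - k (X ω)) P := by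
      refine bdd_integrable (mhfX.sub mkX) (C := M + ‖k‖) fun ω => ?_
      calc |h (f (X ω)) - k (X ω)| ≤ |h (f (X ω))| + |k (X ω)| := abs_sub _ _
        _ ≤ M + ‖k‖ := add_le_add (hb _) (hkM _)
    have key : ∀ w : Ω → ℝ, Measurable w → (∀ ω, |w ω| ≤ M) →
        |(∫ ω, w ω * h (Ylim ω) ∂P) - ∫ ω, w ω * k (X ω) ∂P| ≤ M * r := by
      intro w mw hw
      have i1 : Integrable (fun ω => w ω * h (Ylim ω)) P := imul _ _ M M mw mH hw (fun ω => hb _)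
      have i2 : Integrable (fun ω => w ω * k (X ω)) P := imul _ _ M ‖k‖ mw mkX hw fun ω => hkM _
      rw [← integral_sub i1 i2]
      have e1 : |∫ ω, (w ω * h (Ylim ω) - w ω * k (X ω)) ∂P|
          ≤ ∫ ω, |w ω * h (Ylim ω) - w ω * k (X ω)| ∂P := by
        simpa [Real.norm_eq_abs] using
          norm_integral_le_integral_norm (fun ω => w ω * h (Ylim ω) - w ω * k (X ω)) (μ := P)
      refine e1.trans ?_
      have e2 : ∫ ω, |w ω * h (Ylim ω) - w ω * k (X ω)| ∂P
          ≤ ∫ ω, M * |h (f (X ω)) - k (X ω)| ∂P := by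
        refine integral_mono_ae (i1.sub i2).abs (idiff.abs.const_mul M) ?_
        filter_upwards [hdet] with ω hω
        rw [hω, ← mul_sub, abs_mul]
        exact mul_le_mul_of_nonneg_right (hw ω) (abs_nonneg _)
      refine e2.trans ?_
      rw [integral_const_mul]
    have hmid := hconv ((h.compContinuous ⟨Prod.snd, continuous_snd⟩) *
      (k.compContinuous ⟨Prod.fst, continuous_fst⟩))
    simp only [BoundedContinuousFunction.coe_mul, Pi.mul_apply,
      BoundedContinuousFunction.compContinuous_apply, ContinuousMap.coe_mk] at hmid
    rw [Metric.tendsto_atTop] at hmid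
    obtain ⟨N, hN⟩ := hmid (ε / 4) (by positivity)
    refine ⟨N, fun n hn => ?_⟩
    have h2 := hN n hn
    rw [Real.dist_eq] at h2 ⊢
    beta_reduce
    have e1 := key (fun ω => h (Y n ω)) (mHn n) fun ω => hb _
    have e3 := key (fun ω => h (Ylim ω)) mH fun ω => hb _
    beta_reduce at e1 e3
    rw [← hc_def] at e3
    have hMr : M * r ≤ ε / 4 := by
      calc M * r ≤ M * (ε / (4 * M)) := mul_le_mul_of_nonneg_left hr hM.le
        _ = ε / 4 := by field_simp
    have u1 := abs_sub_le (∫ ω, h (Y n ω) * h (Ylim ω) ∂P)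
      (∫ ω, h (Y n ω) * k (X ω) ∂P) c
    have u2 := abs_sub_le (∫ ω, h (Y n ω) * k (X ω) ∂P)
      (∫ ω, h (Ylim ω) * k (X ω) ∂P) c
    have u3 : |(∫ ω, h (Ylim ω) * k (X ω) ∂P) - c| = |c - ∫ ω, h (Ylim ω) * k (X ω) ∂P| :=
      abs_sub_comm _ _
    nlinarith [abs_nonneg (c - ∫ ω, h (Ylim ω) * k (X ω) ∂P)]
  have iHH : Integrable (fun ω => h (Ylim ω) * h (Ylim ω)) P := imul _ _ M M mH mH (fun ω => hb _) (fun ω => hb _)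
  have expand : ∀ n, ∫ ω, (h (Y n ω) - h (Ylim ω)) ^ 2 ∂P
      = (∫ ω, h (Y n ω) * h (Y n ω) ∂P) - 2 * (∫ ω, h (Y n ω) * h (Ylim ω) ∂P) + c := by
    intro n
    have inn : Integrable (fun ω => h (Y n ω) * h (Y n ω)) P :=
      imul _ _ M M (mHn n) (mHn n) (fun ω => hb _) fun ω => hb _
    have inl : Integrable (fun ω => h (Y n ω) * h (Ylim ω)) P :=
      imul _ _ M M (mHn n) mH (fun ω => hb _) fun ω => hb _
    have hfun : (fun ω => (h (Y n ω) - h (Ylim ω)) ^ 2)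
        = fun ω => (h (Y n ω) * h (Y n ω) - 2 * (h (Y n ω) * h (Ylim ω)))
            + h (Ylim ω) * h (Ylim ω) := funext fun ω => by ring
    have s1 : Integrable
        (fun ω => h (Y n ω) * h (Y n ω) - 2 * (h (Y n ω) * h (Ylim ω))) P :=
      inn.sub (inl.const_mul 2)
    rw [hfun, integral_add s1 iHH, integral_sub inn (inl.const_mul 2), integral_const_mul]
  have final : Tendsto (fun n => (∫ ω, h (Y n ω) * h (Y n ω) ∂P)
      - 2 * (∫ ω, h (Y n ω) * h (Ylim ω) ∂P) + c) atTop (𝓝 (c - 2 * c + c)) :=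
    (hA.sub (hB.const_mul 2)).add tendsto_const_nhds
  rw [show c - 2 * c + c = 0 by ring] at final
  exact final.congr fun n => (expand n).symm

/-- If `(X, Y_n) → (X, Y)` in distribution (tested against bounded continuous functions)
on a product of complete separable metric spaces, and `Y` is a.s. a measurable function
of `X`, then `Y_n → Y` in probability. -/
theorem stmt16 {Ω : Type*} [MeasurableSpace Ω] (P : Measure Ω) [IsProbabilityMeasure P]
    {Ω₁ Ω₂ : Type*}
    [MetricSpace Ω₁] [CompleteSpace Ω₁] [TopologicalSpace.SeparableSpace Ω₁]
    [MeasurableSpace Ω₁] [BorelSpace Ω₁]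
    [MetricSpace Ω₂] [CompleteSpace Ω₂] [TopologicalSpace.SeparableSpace Ω₂]
    [MeasurableSpace Ω₂] [BorelSpace Ω₂]
    (X : Ω → Ω₁) (Y : ℕ → Ω → Ω₂) (Ylim : Ω → Ω₂)
    (hX : Measurable X) (hY : ∀ n, Measurable (Y n)) (hYlim : Measurable Ylim)
    (f : Ω₁ → Ω₂) (hf : Measurable f) (hdet : ∀ᵐ ω ∂P, Ylim ω = f (X ω))
    (hconv : ∀ g : BoundedContinuousFunction (Ω₁ × Ω₂) ℝ,
      Tendsto (fun n => ∫ ω, g (X ω, Y n ω) ∂P) atTop (nhds (∫ ω, g (X ω, Ylim ω) ∂P))) :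
    TendstoInMeasure P Y atTop Ylim := by
  rw [tendstoInMeasure_iff_dist]
  intro ε hε
  rw [ENNReal.tendsto_atTop_zero]
  intro δ hδ
  have hΩ : Nonempty Ω := by
    by_contra hne
    rw [not_nonempty_iff] at hne
    have h1 : P Set.univ = 1 := measure_univ
    rw [Set.univ_eq_empty_iff.mpr hne] at h1
    simp at h1
  haveI hΩ₂ : Nonempty Ω₂ := ⟨Ylim (Classical.arbitrary Ω)⟩
  set z : ℕ → Ω₂ := TopologicalSpace.denseSeq Ω₂ with hz_def
  have hz : DenseRange z := TopologicalSpace.denseRange_denseSeq Ω₂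
  set A : ℕ → Set Ω := fun N => ⋂ (j : ℕ) (_ : j ≤ N), {ω | ε/4 ≤ dist (Ylim ω) (z j)}
    with hA_def
  have hAmeas : ∀ N, MeasurableSet (A N) := by
    intro N
    refine MeasurableSet.iInter fun j => MeasurableSet.iInter fun _ => ?_
    exact measurableSet_le measurable_const (hYlim.dist measurable_const)
  have hAnti : Antitone A := by
    intro N1 N2 hN ω hω
    simp only [hA_def, Set.mem_iInter, Set.mem_setOf_eq] at hω ⊢
    intro j hj
    exact hω j (hj.trans hN)
  have hiInter : ⋂ N, A N = ∅ := by
    ext ω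
    simp only [Set.mem_iInter, Set.mem_empty_iff_false, iff_false, not_forall, hA_def,
      Set.mem_setOf_eq, not_le]
    obtain ⟨j, hj⟩ := hz.exists_dist_lt (Ylim ω) (show (0:ℝ) < ε/4 by positivity)
    exact ⟨j, j, le_rfl, hj⟩
  have htend : Tendsto (fun N => P (A N)) atTop (𝓝 0) := by
    have := tendsto_measure_iInter_atTop (μ := P)
      (fun N => (hAmeas N).nullMeasurableSet) hAnti ⟨0, measure_ne_top _ _⟩
    rw [hiInter] at this
    simpa [Function.comp_def] using this
  have hδ2 : (0 : ℝ≥0∞) < δ / 2 := ENNReal.half_pos hδ.ne'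
  obtain ⟨N, hN⟩ := (htend.eventually (gt_mem_nhds hδ2)).exists
  -- bump functions
  have hbump : ∀ j : ℕ, ∃ b : Ω₂ →ᵇ ℝ, ∀ y, b y = max 0 (1 - (2/ε) * dist y (z j)) := by
    intro j
    have bb : ∀ w : Ω₂, 0 ≤ max 0 (1 - (2/ε) * dist w (z j)) ∧
        max 0 (1 - (2/ε) * dist w (z j)) ≤ 1 := by
      intro w
      refine ⟨le_max_left _ _, max_le zero_le_one ?_⟩
      have : 0 ≤ (2/ε) * dist w (z j) := by positivity
      linarith
    refine ⟨BoundedContinuousFunction.mkOfBound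
      ⟨fun y => max 0 (1 - (2/ε) * dist y (z j)), by fun_prop⟩ 1 ?_, fun y => rfl⟩
    intro x y
    rw [ContinuousMap.coe_mk, Real.dist_eq, abs_le]
    constructor
    · linarith [(bb x).1, (bb x).2, (bb y).1, (bb y).2]
    · linarith [(bb x).1, (bb x).2, (bb y).1, (bb y).2]
  choose b hb using hbump
  have hEt : ∀ j, Tendsto (fun n => P {ω | (1/2 : ℝ) ≤ |b j (Y n ω) - b j (Ylim ω)|})
      atTop (𝓝 0) := by
    intro j
    have hsq := sq_tendsto P X Y Ylim hX hY hYlim f hf hdet hconv (b j)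
    have hub : ∀ n, P {ω | (1/2 : ℝ) ≤ |b j (Y n ω) - b j (Ylim ω)|}
        ≤ 4 * ENNReal.ofReal (∫ ω, (b j (Y n ω) - b j (Ylim ω)) ^ 2 ∂P) := by
      intro n
      have hmeas : Measurable fun ω => b j (Y n ω) - b j (Ylim ω) :=
        ((b j).continuous.measurable.comp (hY n)).sub
          ((b j).continuous.measurable.comp hYlim)
      refine cheb P hmeas ?_
      refine bdd_integrable (hmeas.pow_const 2) (C := (2 * ‖b j‖) ^ 2) fun ω => ?_
      have hp := (b j).norm_coe_le_norm (Y n ω)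
      have hq := (b j).norm_coe_le_norm (Ylim ω)
      rw [Real.norm_eq_abs] at hp hq
      rw [abs_of_nonneg (sq_nonneg _)]
      nlinarith [le_abs_self (b j (Y n ω)), neg_abs_le (b j (Y n ω)),
        le_abs_self (b j (Ylim ω)), neg_abs_le (b j (Ylim ω)),
        abs_nonneg (b j (Y n ω)), abs_nonneg (b j (Ylim ω))]
    have hupper : Tendsto
        (fun n => 4 * ENNReal.ofReal (∫ ω, (b j (Y n ω) - b j (Ylim ω)) ^ 2 ∂P))
        atTop (𝓝 0) := by
      have h1 := ENNReal.tendsto_ofReal hsq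
      have h2 := ENNReal.Tendsto.const_mul (a := 4) h1 (Or.inr (by norm_num))
      simpa using h2
    exact tendsto_of_tendsto_of_tendsto_of_le_of_le tendsto_const_nhds hupper
      (fun n => zero_le) hub
  have hG : Tendsto (fun n => ∑ j ∈ Finset.range (N+1),
      P {ω | (1/2 : ℝ) ≤ |b j (Y n ω) - b j (Ylim ω)|}) atTop (𝓝 0) := by
    have := tendsto_finset_sum (Finset.range (N+1)) (fun j _ => hEt j)
    simpa using this
  obtain ⟨N1, hN1⟩ := eventually_atTop.mp (hG.eventually (gt_mem_nhds hδ2))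
  refine ⟨N1, fun n hn => ?_⟩
  have hincl : {ω | ε ≤ dist (Y n ω) (Ylim ω)} ⊆ A N ∪ ⋃ j ∈ Finset.range (N+1),
      {ω | (1/2 : ℝ) ≤ |b j (Y n ω) - b j (Ylim ω)|} := by
    intro ω hω
    simp only [Set.mem_setOf_eq] at hω
    by_cases hA' : ω ∈ A N
    · exact Or.inl hA'
    · right
      simp only [hA_def, Set.mem_iInter, Set.mem_setOf_eq, not_forall, not_le] at hA'
      obtain ⟨j, hjN, hj⟩ := hA'
      refine Set.mem_biUnion (Finset.mem_range.mpr (Nat.lt_succ_of_le hjN)) ?_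
      simp only [Set.mem_setOf_eq]
      have hd : ε/2 ≤ dist (Y n ω) (z j) := by
        have := dist_triangle (Y n ω) (Ylim ω) (z j)
        have := dist_triangle (Y n ω) (z j) (Ylim ω)
        have hsymm : dist (z j) (Ylim ω) = dist (Ylim ω) (z j) := dist_comm _ _
        linarith
      have h2e : (0:ℝ) ≤ 2/ε := by positivity
      have h1 : b j (Y n ω) = 0 := by
        rw [hb j]
        apply max_eq_left
        have := mul_le_mul_of_nonneg_left hd h2e
        have heq : (2/ε) * (ε/2) = 1 := by field_simp
        linarith
      have h2 : (1/2 : ℝ) ≤ b j (Ylim ω) := by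
        rw [hb j]
        have := mul_le_mul_of_nonneg_left hj.le h2e
        have heq : (2/ε) * (ε/4) = 1/2 := by field_simp; ring
        have : (1/2 : ℝ) ≤ 1 - (2/ε) * dist (Ylim ω) (z j) := by linarith
        exact this.trans (le_max_right _ _)
      have habs : |b j (Y n ω) - b j (Ylim ω)| = b j (Ylim ω) := by
        rw [h1, zero_sub, abs_neg, abs_of_nonneg (by linarith : (0:ℝ) ≤ b j (Ylim ω))]
      rw [habs]
      exact h2
  calc P {ω | ε ≤ dist (Y n ω) (Ylim ω)}
      ≤ P (A N ∪ ⋃ j ∈ Finset.range (N+1),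
        {ω | (1/2 : ℝ) ≤ |b j (Y n ω) - b j (Ylim ω)|}) := measure_mono hincl
    _ ≤ P (A N) + P (⋃ j ∈ Finset.range (N+1),
        {ω | (1/2 : ℝ) ≤ |b j (Y n ω) - b j (Ylim ω)|}) := measure_union_le _ _
    _ ≤ P (A N) + ∑ j ∈ Finset.range (N+1),
        P {ω | (1/2 : ℝ) ≤ |b j (Y n ω) - b j (Ylim ω)|} :=
        add_le_add_right (measure_biUnion_finset_le _ _) _
    _ ≤ δ/2 + δ/2 := add_le_add hN.le (hN1 n hn).le
    _ = δ := ENNReal.add_halves δ
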